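/- For every finite simple graph G, α_1(G) ≥ Σ_{v ∈ V(G)} min{1, 1/(ζ(v) + 1/2)}, where α_1(G) is the maximum size of a vertex set S with Δ(G[S]) ≤ 1. -/

import Mathlib

open SimpleGraph Finset

/-- The minimum degree of a subgraph `H` of `G`: the infimum over vertices of `H`
of the number of neighbors in `H`. -/
noncomputable def subMinDeg {V : Type*} (G : SimpleGraph V) (H : G.Subgraph) : ℕ :=
  sInf ((fun v => (H.neighborSet v).ncard) '' H.verts)

/-- The degenerate degree `ζ(v)`: the maximum of `δ(H)` over all subgraphs `H` of `G`
containing `v`. -/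
noncomputable def zeta {V : Type*} (G : SimpleGraph V) (v : V) : ℕ :=
  sSup {n | ∃ H : G.Subgraph, v ∈ H.verts ∧ subMinDeg G H = n}

/-- A vertex `u` is cheap if `ζ(u) = deg_G(u)` and `ζ(u) ≤ ζ(w)` for every `w ∈ N[u]`. -/
def Cheap {V : Type*} (G : SimpleGraph V) (u : V) : Prop :=
  zeta G u = (G.neighborSet u).ncard ∧ ∀ w, G.Adj u w → zeta G u ≤ zeta G w

section DissocProof

set_option linter.unusedSectionVars false

variable {V : Type*} [Fintype V] [DecidableEq V] (G : SimpleGraph V) [DecidableRel G.Adj]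

/-- The weight function `f(v) = min(1, 1/(ζ(v)+1/2))`. -/
noncomputable def fwt (v : V) : ℝ := min 1 ((1 : ℝ) / (zeta G v + 1/2))

lemma fwt_nonneg (v : V) : 0 ≤ fwt G v := by
  unfold fwt
  have : (0:ℝ) < (zeta G v : ℝ) + 1/2 := by positivity
  have h2 : (0:ℝ) ≤ 1 / ((zeta G v : ℝ) + 1/2) := by positivity
  exact le_min zero_le_one h2

lemma fwt_le_one (v : V) : fwt G v ≤ 1 := min_le_left _ _

lemma subMinDeg_le_card (H : G.Subgraph) : subMinDeg G H ≤ Fintype.card V := by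
  unfold subMinDeg
  rcases H.verts.eq_empty_or_nonempty with h | ⟨v, hv⟩
  · simp [h]
  · have hmem : (H.neighborSet v).ncard ∈ ((fun v => (H.neighborSet v).ncard) '' H.verts) :=
      ⟨v, hv, rfl⟩
    refine le_trans (Nat.sInf_le hmem) ?_
    have : (H.neighborSet v).ncard ≤ (Set.univ : Set V).ncard :=
      Set.ncard_le_ncard (Set.subset_univ _) Set.finite_univ
    simpa [Set.ncard_univ, Nat.card_eq_fintype_card] using this

/-- Key window lemma: if every vertex of `A` has at least `r` neighbours inside `A`,
then every vertex of `A` has degenerate degree at least `r`. -/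
lemma le_zeta_of_min (A : Finset V) (r : ℕ)
    (hA : ∀ x ∈ A, r ≤ (A.filter (G.Adj x)).card) {w : V} (hw : w ∈ A) :
    r ≤ zeta G w := by
  classical
  -- the subgraph induced on A
  let H : G.Subgraph :=
    { verts := ↑A
      Adj := fun x y => G.Adj x y ∧ x ∈ A ∧ y ∈ A
      adj_sub := fun h => h.1
      edge_vert := fun h => h.2.1
      symm := ⟨fun x y h => ⟨h.1.symm, h.2.2, h.2.1⟩⟩ }
  have hnb : ∀ v ∈ A, H.neighborSet v = ↑(A.filter (G.Adj v)) := by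
    intro v hv
    ext y
    simp only [SimpleGraph.Subgraph.mem_neighborSet, Finset.coe_filter, Set.mem_setOf_eq,
      Finset.mem_coe]
    constructor
    · rintro ⟨h1, _, h3⟩; exact ⟨h3, h1⟩
    · rintro ⟨h1, h2⟩; exact ⟨h2, hv, h1⟩
  have hsub : r ≤ subMinDeg G H := by
    unfold subMinDeg
    refine le_csInf ⟨(H.neighborSet w).ncard, ⟨w, hw, rfl⟩⟩ ?_
    rintro n ⟨v, hv, rfl⟩
    have hv' : v ∈ A := hv
    show r ≤ (H.neighborSet v).ncard
    rw [hnb v hv', Set.ncard_coe_finset]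
    exact hA v hv'
  have hmem : subMinDeg G H ∈ {n | ∃ H : G.Subgraph, w ∈ H.verts ∧ subMinDeg G H = n} :=
    ⟨H, hw, rfl⟩
  have hbdd : BddAbove {n | ∃ H : G.Subgraph, w ∈ H.verts ∧ subMinDeg G H = n} := by
    refine ⟨Fintype.card V, ?_⟩
    rintro n ⟨H', _, rfl⟩
    exact subMinDeg_le_card G H'
  exact le_trans hsub (le_csSup hbdd hmem)

lemma fwt_window (A : Finset V) (r : ℕ)
    (hA : ∀ x ∈ A, r ≤ (A.filter (G.Adj x)).card) {w : V} (hw : w ∈ A) :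
    fwt G w ≤ 1 / ((r : ℝ) + 1/2) := by
  have hz : r ≤ zeta G w := le_zeta_of_min G A r hA hw
  have h1 : (0:ℝ) < (r : ℝ) + 1/2 := by positivity
  have h2 : ((r : ℝ) + 1/2) ≤ ((zeta G w : ℝ) + 1/2) := by
    have : (r:ℝ) ≤ (zeta G w : ℝ) := Nat.cast_le.mpr hz
    linarith
  calc fwt G w ≤ (1 : ℝ) / (zeta G w + 1/2) := min_le_right _ _
    _ ≤ 1 / ((r : ℝ) + 1/2) := one_div_le_one_div_of_le h1 h2


/-- The main induction: given interface pools `S₁` (open singles, half-price `q`)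
and `S₂` (matched vertices, full price `q`) with remaining budgets `b`,
the remaining vertex set `A` contains a compatible partial dissociation set
covering the total `fwt`-mass of `A` minus the budgets. -/
lemma dissoc_main (n : ℕ) : ∀ (A S₁ S₂ : Finset V) (q b : V → ℝ),
    A.card = n →
    (∀ y ∈ S₁, y ∉ A) →
    (∀ y ∈ S₂, y ∉ A) →
    (∀ y ∈ S₁, y ∉ S₂) →
    (∀ y ∈ S₁, 0 ≤ q y) →
    (∀ y ∈ S₂, 0 ≤ q y) →
    (∀ y ∈ S₁, ∀ v ∈ A, fwt G v ≤ 2 * q y) →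
    (∀ y ∈ S₂, ∀ v ∈ A, fwt G v ≤ q y) →
    (∀ y ∈ S₁, 2 * q y * ((A.filter (G.Adj y)).card : ℝ) ≤ b y + q y) →
    (∀ y ∈ S₁, q y * ((A.filter (G.Adj y)).card : ℝ) ≤ b y) →
    (∀ y ∈ S₂, q y * ((A.filter (G.Adj y)).card : ℝ) ≤ b y) →
    ∃ s : Finset V, s ⊆ A ∧
      (∀ v ∈ s, ((s ∪ S₁).filter (G.Adj v)).card ≤ 1) ∧
      (∀ v ∈ s, ∀ y ∈ S₂, ¬ G.Adj v y) ∧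
      (∀ y ∈ S₁, (s.filter (G.Adj y)).card ≤ 1) ∧
      (∑ v ∈ A, fwt G v) ≤ s.card + ((∑ y ∈ S₁, b y) + (∑ y ∈ S₂, b y)) := by
  induction n with
  | zero =>
    intro A S₁ S₂ q b hcard h₁A h₂A h₁₂ hq₁ hq₂ hW₁ hW₂ hW3 hW4 hW5
    have hA : A = ∅ := card_eq_zero.mp hcard
    subst hA
    refine ⟨∅, Finset.empty_subset _, by simp, by simp, by simp, ?_⟩
    have hb₁ : 0 ≤ ∑ y ∈ S₁, b y := by
      refine Finset.sum_nonneg (fun y hy => ?_)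
      have h1 := hW4 y hy
      have h2 : 0 ≤ q y * (((∅ : Finset V).filter (G.Adj y)).card : ℝ) := by
        apply mul_nonneg (hq₁ y hy); positivity
      linarith
    have hb₂ : 0 ≤ ∑ y ∈ S₂, b y := by
      refine Finset.sum_nonneg (fun y hy => ?_)
      have h1 := hW5 y hy
      have h2 : 0 ≤ q y * (((∅ : Finset V).filter (G.Adj y)).card : ℝ) := by
        apply mul_nonneg (hq₂ y hy); positivity
      linarith
    simp only [Finset.sum_empty, Finset.card_empty, Nat.cast_zero, zero_add]
    linarith
  | succ m ih =>
    intro A S₁ S₂ q b hcard h₁A h₂A h₁₂ hq₁ hq₂ hW₁ hW₂ hW3 hW4 hW5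
    have hAne : A.Nonempty := Finset.card_pos.mp (by omega)
    obtain ⟨u, hu, hmin⟩ := A.exists_min_image (fun x => (A.filter (G.Adj x)).card) hAne
    -- r = min degree inside A, ψ = 1/(r+1/2) the window bound
    set r : ℕ := (A.filter (G.Adj u)).card with hrdef
    set ψ : ℝ := 1 / ((r : ℝ) + 1/2) with hψdef
    have hrpos : (0:ℝ) < (r : ℝ) + 1/2 := by positivity
    have hψpos : 0 < ψ := by rw [hψdef]; positivity
    have hψr : ψ * ((r : ℝ) + 1/2) = 1 := by
      rw [hψdef]; field_simp
    have hwin : ∀ w ∈ A, fwt G w ≤ ψ := by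
      intro w hw
      exact fwt_window G A r (fun x hx => hmin x hx) hw
    set A' : Finset V := A.erase u with hA'def
    have hAsub : A' ⊆ A := Finset.erase_subset _ _
    have hcard' : A'.card = m := by
      rw [hA'def, Finset.card_erase_of_mem hu]; omega
    have huA' : u ∉ A' := Finset.notMem_erase _ _
    have hsplit : ∑ v ∈ A, fwt G v = fwt G u + ∑ v ∈ A', fwt G v :=
      (Finset.add_sum_erase A _ hu).symm
    have hfmono : ∀ y : V, ((A'.filter (G.Adj y)).card : ℝ) ≤ ((A.filter (G.Adj y)).card : ℝ) :=
      fun y => Nat.cast_le.mpr (Finset.card_le_card (Finset.filter_subset_filter _ hAsub))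
    have hfsucc : ∀ y : V, G.Adj y u →
        ((A.filter (G.Adj y)).card : ℝ) = ((A'.filter (G.Adj y)).card : ℝ) + 1 := by
      intro y hadj
      have heq : A.filter (G.Adj y) = insert u (A'.filter (G.Adj y)) := by
        ext w
        simp only [Finset.mem_filter, Finset.mem_insert, hA'def, Finset.mem_erase]
        constructor
        · rintro ⟨hwA, hyw⟩
          by_cases hwu : w = u
          · exact Or.inl hwu
          · exact Or.inr ⟨⟨hwu, hwA⟩, hyw⟩
        · rintro (rfl | ⟨⟨_, hwA⟩, hyw⟩)
          · exact ⟨hu, hadj⟩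
          · exact ⟨hwA, hyw⟩
      have hnotmem : u ∉ A'.filter (G.Adj y) := fun hmem => huA' (Finset.mem_of_mem_filter _ hmem)
      rw [heq, Finset.card_insert_of_notMem hnotmem]
      push_cast; ring
    have hfu : A'.filter (G.Adj u) = A.filter (G.Adj u) := by
      ext w
      simp only [Finset.mem_filter, hA'def, Finset.mem_erase]
      constructor
      · rintro ⟨⟨_, hwA⟩, h⟩; exact ⟨hwA, h⟩
      · rintro ⟨hwA, h⟩; exact ⟨⟨(G.ne_of_adj h).symm, hwA⟩, h⟩
    by_cases hT₂ : ∃ y ∈ S₂, G.Adj u y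
    · -- CASE 1 : u has a matched neighbour y₀; reject u, pay fwt(u) from pool of y₀.
      obtain ⟨y₀, hy₀S, hy₀adj⟩ := hT₂
      have hy₀A : y₀ ∉ A := h₂A y₀ hy₀S
      set b' : V → ℝ := Function.update b y₀ (b y₀ - q y₀) with hb'def
      have hb'S₁ : ∀ y ∈ S₁, b' y = b y := by
        intro y hy
        refine Function.update_of_ne (fun h => h₁₂ y hy ?_) _ _
        rw [h]; exact hy₀S
      obtain ⟨s, hsub, hC1, hC2, hC3, hsum⟩ :=
        ih A' S₁ S₂ q b' hcard'
          (fun y hy hmem => h₁A y hy (hAsub hmem))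
          (fun y hy hmem => h₂A y hy (hAsub hmem))
          h₁₂ hq₁ hq₂
          (fun y hy v hv => hW₁ y hy v (hAsub hv))
          (fun y hy v hv => hW₂ y hy v (hAsub hv))
          (fun y hy => by
            rw [hb'S₁ y hy]
            calc 2 * q y * ((A'.filter (G.Adj y)).card : ℝ)
                ≤ 2 * q y * ((A.filter (G.Adj y)).card : ℝ) := by
                  apply mul_le_mul_of_nonneg_left (hfmono y)
                  have := hq₁ y hy; linarith
              _ ≤ b y + q y := hW3 y hy)
          (fun y hy => by
            rw [hb'S₁ y hy]
            calc q y * ((A'.filter (G.Adj y)).card : ℝ)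
                ≤ q y * ((A.filter (G.Adj y)).card : ℝ) := by
                  apply mul_le_mul_of_nonneg_left (hfmono y) (hq₁ y hy)
              _ ≤ b y := hW4 y hy)
          (fun y hy => by
            by_cases hyy : y = y₀
            · subst hyy
              rw [hb'def, Function.update_self]
              have h1 := hW5 y hy
              rw [hfsucc y hy₀adj.symm] at h1
              have h2 : q y * (((A'.filter (G.Adj y)).card : ℝ) + 1)
                  = q y * ((A'.filter (G.Adj y)).card : ℝ) + q y := by ring
              linarith
            · rw [hb'def, Function.update_of_ne hyy]
              calc q y * ((A'.filter (G.Adj y)).card : ℝ)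
                  ≤ q y * ((A.filter (G.Adj y)).card : ℝ) := by
                    apply mul_le_mul_of_nonneg_left (hfmono y) (hq₂ y hy)
                _ ≤ b y := hW5 y hy)
      refine ⟨s, hsub.trans hAsub, hC1, hC2, hC3, ?_⟩
      have hS₁sum : ∑ y ∈ S₁, b' y = ∑ y ∈ S₁, b y :=
        Finset.sum_congr rfl (fun y hy => hb'S₁ y hy)
      have hS₂sum : ∑ y ∈ S₂, b' y = ∑ y ∈ S₂, b y - q y₀ := by
        rw [hb'def, Finset.sum_update_of_mem hy₀S]
        rw [Finset.sdiff_singleton_eq_erase, Finset.sum_erase_eq_sub hy₀S]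
        ring
      have hfq : fwt G u ≤ q y₀ := hW₂ y₀ hy₀S u hu
      rw [hS₁sum, hS₂sum] at hsum
      rw [hsplit]
      linarith
    · push_neg at hT₂
      set T₁ : Finset V := S₁.filter (fun y => G.Adj u y) with hT₁def
      have hT₁mem : ∀ y, y ∈ T₁ ↔ y ∈ S₁ ∧ G.Adj u y := by
        intro y; rw [hT₁def]; simp [Finset.mem_filter]
      by_cases hc2 : 2 ≤ T₁.card
      · -- CASE 2 : u has two open-single neighbours; reject u, pay halves.
        obtain ⟨y₁, hy₁T, y₂, hy₂T, hne⟩ := Finset.one_lt_card.mp hc2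
        obtain ⟨hy₁S, hy₁adj⟩ := (hT₁mem y₁).mp hy₁T
        obtain ⟨hy₂S, hy₂adj⟩ := (hT₁mem y₂).mp hy₂T
        set b' : V → ℝ := fun y =>
          b y - (if y = y₁ then q y₁ else 0) - (if y = y₂ then q y₂ else 0) with hb'def
        have hb'val : ∀ y, y ≠ y₁ → y ≠ y₂ → b' y = b y := by
          intro y h1 h2; rw [hb'def]; simp [h1, h2]
        have hb'y₁ : b' y₁ = b y₁ - q y₁ := by rw [hb'def]; simp [hne]
        have hb'y₂ : b' y₂ = b y₂ - q y₂ := by rw [hb'def]; simp [hne.symm]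
        have hb'le : ∀ y ∈ S₁, b' y ≤ b y := by
          intro y hy
          by_cases h1 : y = y₁
          · subst h1; rw [hb'y₁]; have := hq₁ y hy; linarith
          · by_cases h2 : y = y₂
            · subst h2; rw [hb'y₂]; have := hq₁ y hy; linarith
            · rw [hb'val y h1 h2]
        obtain ⟨s, hsub, hC1, hC2, hC3, hsum⟩ :=
          ih A' S₁ S₂ q b' hcard'
            (fun y hy hmem => h₁A y hy (hAsub hmem))
            (fun y hy hmem => h₂A y hy (hAsub hmem))
            h₁₂ hq₁ hq₂
            (fun y hy v hv => hW₁ y hy v (hAsub hv))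
            (fun y hy v hv => hW₂ y hy v (hAsub hv))
            (fun y hy => by
              by_cases h1 : y = y₁
              · subst h1
                rw [hb'y₁]
                have h3 := hW3 y hy
                rw [hfsucc y hy₁adj.symm] at h3
                have hexp : 2 * q y * (((A'.filter (G.Adj y)).card : ℝ) + 1)
                    = 2 * q y * ((A'.filter (G.Adj y)).card : ℝ) + 2 * q y := by ring
                have hq := hq₁ y hy
                linarith
              · by_cases h2 : y = y₂
                · subst h2
                  rw [hb'y₂]
                  have h3 := hW3 y hy
                  rw [hfsucc y hy₂adj.symm] at h3
                  have hexp : 2 * q y * (((A'.filter (G.Adj y)).card : ℝ) + 1)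
                      = 2 * q y * ((A'.filter (G.Adj y)).card : ℝ) + 2 * q y := by ring
                  have hq := hq₁ y hy
                  linarith
                · rw [hb'val y h1 h2]
                  calc 2 * q y * ((A'.filter (G.Adj y)).card : ℝ)
                      ≤ 2 * q y * ((A.filter (G.Adj y)).card : ℝ) := by
                        apply mul_le_mul_of_nonneg_left (hfmono y)
                        have := hq₁ y hy; linarith
                    _ ≤ b y + q y := hW3 y hy)
            (fun y hy => by
              by_cases h1 : y = y₁
              · subst h1
                rw [hb'y₁]
                have h3 := hW4 y hy
                rw [hfsucc y hy₁adj.symm] at h3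
                have hexp : q y * (((A'.filter (G.Adj y)).card : ℝ) + 1)
                    = q y * ((A'.filter (G.Adj y)).card : ℝ) + q y := by ring
                linarith
              · by_cases h2 : y = y₂
                · subst h2
                  rw [hb'y₂]
                  have h3 := hW4 y hy
                  rw [hfsucc y hy₂adj.symm] at h3
                  have hexp : q y * (((A'.filter (G.Adj y)).card : ℝ) + 1)
                      = q y * ((A'.filter (G.Adj y)).card : ℝ) + q y := by ring
                  linarith
                · rw [hb'val y h1 h2]
                  calc q y * ((A'.filter (G.Adj y)).card : ℝ)
                      ≤ q y * ((A.filter (G.Adj y)).card : ℝ) :=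
                        mul_le_mul_of_nonneg_left (hfmono y) (hq₁ y hy)
                    _ ≤ b y := hW4 y hy)
            (fun y hy => by
              have hy1 : y ≠ y₁ := fun h => h₁₂ y₁ hy₁S (by rw [← h]; exact hy)
              have hy2 : y ≠ y₂ := fun h => h₁₂ y₂ hy₂S (by rw [← h]; exact hy)
              rw [hb'val y hy1 hy2]
              calc q y * ((A'.filter (G.Adj y)).card : ℝ)
                  ≤ q y * ((A.filter (G.Adj y)).card : ℝ) :=
                    mul_le_mul_of_nonneg_left (hfmono y) (hq₂ y hy)
                _ ≤ b y := hW5 y hy)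
        refine ⟨s, hsub.trans hAsub, hC1, hC2, hC3, ?_⟩
        have hS₂sum : ∑ y ∈ S₂, b' y = ∑ y ∈ S₂, b y := by
          refine Finset.sum_congr rfl (fun y hy => ?_)
          have hy1 : y ≠ y₁ := fun h => h₁₂ y₁ hy₁S (by rw [← h]; exact hy)
          have hy2 : y ≠ y₂ := fun h => h₁₂ y₂ hy₂S (by rw [← h]; exact hy)
          exact hb'val y hy1 hy2
        have hS₁sum : ∑ y ∈ S₁, b' y = ∑ y ∈ S₁, b y - q y₁ - q y₂ := by
          rw [hb'def]
          rw [Finset.sum_sub_distrib, Finset.sum_sub_distrib]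
          rw [Finset.sum_ite_eq' S₁ y₁ (fun _ => q y₁), Finset.sum_ite_eq' S₁ y₂ (fun _ => q y₂)]
          simp [hy₁S, hy₂S]
        have hfq : fwt G u ≤ q y₁ + q y₂ := by
          have h1 := hW₁ y₁ hy₁S u hu
          have h2 := hW₁ y₂ hy₂S u hu
          linarith
        rw [hS₁sum, hS₂sum] at hsum
        rw [hsplit]
        linarith
      · by_cases hc1 : T₁.card = 1
        · -- CASE 3 : u has exactly one open-single neighbour y₀ : pair u with y₀.
          obtain ⟨y₀, hy₀eq⟩ := Finset.card_eq_one.mp hc1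
          have hy₀T : y₀ ∈ T₁ := by rw [hy₀eq]; exact Finset.mem_singleton_self _
          obtain ⟨hy₀S, hy₀adj⟩ := (hT₁mem y₀).mp hy₀T
          have huniq : ∀ y ∈ S₁, G.Adj u y → y = y₀ := by
            intro y hy hadj
            have : y ∈ T₁ := (hT₁mem y).mpr ⟨hy, hadj⟩
            rw [hy₀eq] at this
            exact Finset.mem_singleton.mp this
          have hy₀A : y₀ ∉ A := h₁A y₀ hy₀S
          have hy₀u : y₀ ≠ u := fun h => hy₀A (h ▸ hu)
          have huS₂ : u ∉ S₂ := fun h => h₂A u h hu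
          have hy₀S₂ : y₀ ∉ S₂ := h₁₂ y₀ hy₀S
          set k : ℝ := ((A'.filter (G.Adj y₀)).card : ℝ) with hkdef
          have hK : ((A.filter (G.Adj y₀)).card : ℝ) = k + 1 := hfsucc y₀ hy₀adj.symm
          set q' : V → ℝ :=
            Function.update (Function.update q y₀ (2 * q y₀)) u (min ψ (2 * q y₀)) with hq'def
          set b' : V → ℝ :=
            Function.update (Function.update b y₀ (2 * q y₀ * k)) u
              (1 + b y₀ - fwt G u - 2 * q y₀ * k) with hb'def
          have hq'u : q' u = min ψ (2 * q y₀) := by rw [hq'def]; simp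
          have hq'y₀ : q' y₀ = 2 * q y₀ := by
            rw [hq'def, Function.update_of_ne hy₀u, Function.update_self]
          have hq'val : ∀ y, y ≠ u → y ≠ y₀ → q' y = q y := by
            intro y h1 h2
            rw [hq'def, Function.update_of_ne h1, Function.update_of_ne h2]
          have hb'u : b' u = 1 + b y₀ - fwt G u - 2 * q y₀ * k := by rw [hb'def]; simp
          have hb'y₀ : b' y₀ = 2 * q y₀ * k := by
            rw [hb'def, Function.update_of_ne hy₀u, Function.update_self]
          have hb'val : ∀ y, y ≠ u → y ≠ y₀ → b' y = b y := by
            intro y h1 h2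
            rw [hb'def, Function.update_of_ne h1, Function.update_of_ne h2]
          have hq₀ : 0 ≤ q y₀ := hq₁ y₀ hy₀S
          have hψr2 : ψ * (r : ℝ) = 1 - ψ/2 := by linear_combination hψr
          have h3 : 2 * q y₀ * k ≤ b y₀ - q y₀ := by
            have h30 := hW3 y₀ hy₀S
            rw [hK] at h30
            have hexp : 2 * q y₀ * (k + 1) = 2 * q y₀ * k + 2 * q y₀ := by ring
            linarith
          have hP : fwt G u + min ψ (2 * q y₀) * (r : ℝ) + 2 * q y₀ * k ≤ 1 + b y₀ := by
            rcases le_or_gt ψ (2 * q y₀) with hcase | hcase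
            · rw [min_eq_left hcase]
              have hfu' : fwt G u ≤ ψ := hwin u hu
              linarith
            · rw [min_eq_right hcase.le]
              have hfu' : fwt G u ≤ 2 * q y₀ := hW₁ y₀ hy₀S u hu
              have h5 : 2 * q y₀ * ((r:ℝ) + 1/2) < 1 := by
                rw [hψdef] at hcase
                exact (lt_div_iff₀ hrpos).mp hcase
              have hexp : 2 * q y₀ * ((r:ℝ) + 1/2) = 2 * q y₀ * (r:ℝ) + q y₀ := by ring
              linarith
          obtain ⟨s', hsub, hC1, hC2, hC3, hsum⟩ :=
            ih A' (S₁.erase y₀) (insert y₀ (insert u S₂)) q' b' hcard'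
              (fun y hy hmem => h₁A y (Finset.mem_of_mem_erase hy) (hAsub hmem))
              (fun y hy hmem => by
                rcases Finset.mem_insert.mp hy with rfl | hy'
                · exact hy₀A (hAsub hmem)
                · rcases Finset.mem_insert.mp hy' with rfl | hy''
                  · exact huA' hmem
                  · exact h₂A y hy'' (hAsub hmem))
              (fun y hy hmem => by
                have hyS₁ : y ∈ S₁ := Finset.mem_of_mem_erase hy
                have hyny₀ : y ≠ y₀ := Finset.ne_of_mem_erase hy
                rcases Finset.mem_insert.mp hmem with h | h
                · exact hyny₀ h
                · rcases Finset.mem_insert.mp h with h' | h'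
                  · exact h₁A y hyS₁ (h' ▸ hu)
                  · exact h₁₂ y hyS₁ h')
              (fun y hy => by
                have hyS₁ : y ∈ S₁ := Finset.mem_of_mem_erase hy
                have h1 : y ≠ u := fun h => h₁A y hyS₁ (h ▸ hu)
                rw [hq'val y h1 (Finset.ne_of_mem_erase hy)]
                exact hq₁ y hyS₁)
              (fun y hy => by
                rcases Finset.mem_insert.mp hy with rfl | hy'
                · rw [hq'y₀]; linarith
                · rcases Finset.mem_insert.mp hy' with rfl | hy''
                  · rw [hq'u]
                    exact le_min hψpos.le (by linarith)
                  · have h1 : y ≠ u := fun h => h₂A y hy'' (h ▸ hu)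
                    have h2 : y ≠ y₀ := fun h => hy₀S₂ (h ▸ hy'')
                    rw [hq'val y h1 h2]
                    exact hq₂ y hy'')
              (fun y hy v hv => by
                have hyS₁ : y ∈ S₁ := Finset.mem_of_mem_erase hy
                have h1 : y ≠ u := fun h => h₁A y hyS₁ (h ▸ hu)
                rw [hq'val y h1 (Finset.ne_of_mem_erase hy)]
                exact hW₁ y hyS₁ v (hAsub hv))
              (fun y hy v hv => by
                rcases Finset.mem_insert.mp hy with rfl | hy'
                · rw [hq'y₀]
                  exact hW₁ y hy₀S v (hAsub hv)
                · rcases Finset.mem_insert.mp hy' with rfl | hy''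
                  · rw [hq'u]
                    exact le_min (hwin v (hAsub hv)) (hW₁ y₀ hy₀S v (hAsub hv))
                  · have h1 : y ≠ u := fun h => h₂A y hy'' (h ▸ hu)
                    have h2 : y ≠ y₀ := fun h => hy₀S₂ (h ▸ hy'')
                    rw [hq'val y h1 h2]
                    exact hW₂ y hy'' v (hAsub hv))
              (fun y hy => by
                have hyS₁ : y ∈ S₁ := Finset.mem_of_mem_erase hy
                have h1 : y ≠ u := fun h => h₁A y hyS₁ (h ▸ hu)
                have h2 : y ≠ y₀ := Finset.ne_of_mem_erase hy
                rw [hq'val y h1 h2, hb'val y h1 h2]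
                calc 2 * q y * ((A'.filter (G.Adj y)).card : ℝ)
                    ≤ 2 * q y * ((A.filter (G.Adj y)).card : ℝ) := by
                      apply mul_le_mul_of_nonneg_left (hfmono y)
                      have := hq₁ y hyS₁; linarith
                  _ ≤ b y + q y := hW3 y hyS₁)
              (fun y hy => by
                have hyS₁ : y ∈ S₁ := Finset.mem_of_mem_erase hy
                have h1 : y ≠ u := fun h => h₁A y hyS₁ (h ▸ hu)
                have h2 : y ≠ y₀ := Finset.ne_of_mem_erase hy
                rw [hq'val y h1 h2, hb'val y h1 h2]
                calc q y * ((A'.filter (G.Adj y)).card : ℝ)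
                    ≤ q y * ((A.filter (G.Adj y)).card : ℝ) :=
                      mul_le_mul_of_nonneg_left (hfmono y) (hq₁ y hyS₁)
                  _ ≤ b y := hW4 y hyS₁)
              (fun y hy => by
                rcases Finset.mem_insert.mp hy with rfl | hy'
                · rw [hq'y₀, hb'y₀, ← hkdef]
                · rcases Finset.mem_insert.mp hy' with rfl | hy''
                  · rw [hq'u, hb'u, hfu]
                    have : ((A.filter (G.Adj y)).card : ℝ) = (r : ℝ) := by rw [hrdef]
                    rw [this]
                    linarith
                  · have h1 : y ≠ u := fun h => h₂A y hy'' (h ▸ hu)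
                    have h2 : y ≠ y₀ := fun h => hy₀S₂ (h ▸ hy'')
                    rw [hq'val y h1 h2, hb'val y h1 h2]
                    calc q y * ((A'.filter (G.Adj y)).card : ℝ)
                        ≤ q y * ((A.filter (G.Adj y)).card : ℝ) :=
                          mul_le_mul_of_nonneg_left (hfmono y) (hq₂ y hy'')
                      _ ≤ b y := hW5 y hy'')
          have hus' : u ∉ s' := fun h => huA' (hsub h)
          have huy₀S₂' : u ∈ insert y₀ (insert u S₂) :=
            Finset.mem_insert_of_mem (Finset.mem_insert_self _ _)
          have hy₀S₂' : y₀ ∈ insert y₀ (insert u S₂) := Finset.mem_insert_self _ _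
          refine ⟨insert u s', Finset.insert_subset hu (hsub.trans hAsub), ?_, ?_, ?_, ?_⟩
          · intro v hv
            rcases Finset.mem_insert.mp hv with rfl | hv'
            · -- v = u : its only neighbour in s ∪ S₁ is y₀
              have hsubset : (insert v s' ∪ S₁).filter (G.Adj v) ⊆ {y₀} := by
                intro w hw
                obtain ⟨hwmem, hwadj⟩ := Finset.mem_filter.mp hw
                rcases Finset.mem_union.mp hwmem with hw1 | hw2
                · rcases Finset.mem_insert.mp hw1 with rfl | hw1'
                  · exact absurd hwadj (G.irrefl)
                  · exact absurd hwadj.symm (hC2 w hw1' v huy₀S₂')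
                · rw [Finset.mem_singleton]
                  exact huniq w hw2 hwadj
              calc ((insert v s' ∪ S₁).filter (G.Adj v)).card ≤ ({y₀} : Finset V).card :=
                    Finset.card_le_card hsubset
                _ = 1 := Finset.card_singleton _
            · have hsubset : (insert u s' ∪ S₁).filter (G.Adj v)
                  ⊆ (s' ∪ S₁.erase y₀).filter (G.Adj v) := by
                intro w hw
                obtain ⟨hwmem, hwadj⟩ := Finset.mem_filter.mp hw
                refine Finset.mem_filter.mpr ⟨?_, hwadj⟩
                rcases Finset.mem_union.mp hwmem with hw1 | hw2
                · rcases Finset.mem_insert.mp hw1 with rfl | hw1'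
                  · exact absurd hwadj (hC2 v hv' w huy₀S₂')
                  · exact Finset.mem_union_left _ hw1'
                · have hwy₀ : w ≠ y₀ := by
                    rintro rfl
                    exact (hC2 v hv' w hy₀S₂') hwadj
                  exact Finset.mem_union_right _ (Finset.mem_erase.mpr ⟨hwy₀, hw2⟩)
              exact le_trans (Finset.card_le_card hsubset) (hC1 v hv')
          · intro v hv y hy
            rcases Finset.mem_insert.mp hv with rfl | hv'
            · exact hT₂ y hy
            · exact hC2 v hv' y (Finset.mem_insert_of_mem (Finset.mem_insert_of_mem hy))
          · intro y hy
            by_cases hyy : y = y₀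
            · subst hyy
              have hsubset : (insert u s').filter (G.Adj y) ⊆ {u} := by
                intro w hw
                obtain ⟨hwmem, hwadj⟩ := Finset.mem_filter.mp hw
                rcases Finset.mem_insert.mp hwmem with rfl | hw'
                · exact Finset.mem_singleton_self _
                · exact absurd hwadj.symm (hC2 w hw' y hy₀S₂')
              calc ((insert u s').filter (G.Adj y)).card ≤ ({u} : Finset V).card :=
                    Finset.card_le_card hsubset
                _ = 1 := Finset.card_singleton _
            · have hnadj : ¬ G.Adj y u := fun h => hyy (huniq y hy h.symm)
              rw [Finset.filter_insert]
              rw [if_neg hnadj]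
              exact hC3 y (Finset.mem_erase.mpr ⟨hyy, hy⟩)
          · have hS₁sum : ∑ y ∈ S₁.erase y₀, b' y = ∑ y ∈ S₁, b y - b y₀ := by
              rw [show ∑ y ∈ S₁.erase y₀, b' y = ∑ y ∈ S₁.erase y₀, b y from
                Finset.sum_congr rfl (fun y hy => hb'val y
                  (fun h => h₁A y (Finset.mem_of_mem_erase hy) (h ▸ hu))
                  (Finset.ne_of_mem_erase hy))]
              exact Finset.sum_erase_eq_sub hy₀S
            have hS₂sum : ∑ y ∈ insert y₀ (insert u S₂), b' y
                = (2 * q y₀ * k) + ((1 + b y₀ - fwt G u - 2 * q y₀ * k) + ∑ y ∈ S₂, b y) := by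
              rw [Finset.sum_insert (by
                intro h
                rcases Finset.mem_insert.mp h with h' | h'
                · exact hy₀u h'
                · exact hy₀S₂ h')]
              rw [Finset.sum_insert huS₂]
              rw [hb'y₀, hb'u]
              congr 1
              congr 1
              exact Finset.sum_congr rfl (fun y hy => hb'val y
                (fun h => h₂A y hy (h ▸ hu)) (fun h => hy₀S₂ (h ▸ hy)))
            rw [hS₁sum, hS₂sum] at hsum
            rw [hsplit, Finset.card_insert_of_notMem hus']
            push_cast
            linarith
        · -- CASE 4 : u has no open-single neighbour and no matched neighbour: fresh single.
          have hc0 : T₁ = ∅ := Finset.card_eq_zero.mp (by omega)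
          have hnoS₁ : ∀ y ∈ S₁, ¬ G.Adj u y := by
            intro y hy hadj
            have : y ∈ T₁ := (hT₁mem y).mpr ⟨hy, hadj⟩
            rw [hc0] at this
            exact absurd this (Finset.notMem_empty _)
          have huS₁ : u ∉ S₁ := fun h => h₁A u h hu
          have huS₂ : u ∉ S₂ := fun h => h₂A u h hu
          set q' : V → ℝ := Function.update q u (ψ/2) with hq'def
          set b' : V → ℝ := Function.update b u (1 - fwt G u) with hb'def
          have hq'u : q' u = ψ/2 := by rw [hq'def]; simp
          have hb'u : b' u = 1 - fwt G u := by rw [hb'def]; simp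
          have hq'val : ∀ y, y ≠ u → q' y = q y := fun y h => Function.update_of_ne h _ _
          have hb'val : ∀ y, y ≠ u → b' y = b y := fun y h => Function.update_of_ne h _ _
          have hneu₁ : ∀ y ∈ S₁, y ≠ u := fun y hy h => h₁A y hy (h ▸ hu)
          have hneu₂ : ∀ y ∈ S₂, y ≠ u := fun y hy h => h₂A y hy (h ▸ hu)
          have hψr2 : ψ * (r : ℝ) = 1 - ψ/2 := by linear_combination hψr
          have hfuψ : fwt G u ≤ ψ := hwin u hu
          obtain ⟨s', hsub, hC1, hC2, hC3, hsum⟩ :=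
            ih A' (insert u S₁) S₂ q' b' hcard'
              (fun y hy hmem => by
                rcases Finset.mem_insert.mp hy with rfl | hy'
                · exact huA' hmem
                · exact h₁A y hy' (hAsub hmem))
              (fun y hy hmem => h₂A y hy (hAsub hmem))
              (fun y hy => by
                rcases Finset.mem_insert.mp hy with rfl | hy'
                · exact huS₂
                · exact h₁₂ y hy')
              (fun y hy => by
                rcases Finset.mem_insert.mp hy with rfl | hy'
                · rw [hq'u]; positivity
                · rw [hq'val y (hneu₁ y hy')]; exact hq₁ y hy')
              (fun y hy => by
                rw [hq'val y (hneu₂ y hy)]; exact hq₂ y hy)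
              (fun y hy v hv => by
                rcases Finset.mem_insert.mp hy with rfl | hy'
                · rw [hq'u]
                  have := hwin v (hAsub hv)
                  linarith
                · rw [hq'val y (hneu₁ y hy')]
                  exact hW₁ y hy' v (hAsub hv))
              (fun y hy v hv => by
                rw [hq'val y (hneu₂ y hy)]
                exact hW₂ y hy v (hAsub hv))
              (fun y hy => by
                rcases Finset.mem_insert.mp hy with rfl | hy'
                · rw [hq'u, hb'u, hfu]
                  have hcast : ((A.filter (G.Adj y)).card : ℝ) = (r : ℝ) := by rw [hrdef]
                  rw [hcast]
                  linarith
                · rw [hq'val y (hneu₁ y hy'), hb'val y (hneu₁ y hy')]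
                  calc 2 * q y * ((A'.filter (G.Adj y)).card : ℝ)
                      ≤ 2 * q y * ((A.filter (G.Adj y)).card : ℝ) := by
                        apply mul_le_mul_of_nonneg_left (hfmono y)
                        have := hq₁ y hy'; linarith
                    _ ≤ b y + q y := hW3 y hy')
              (fun y hy => by
                rcases Finset.mem_insert.mp hy with rfl | hy'
                · rw [hq'u, hb'u, hfu]
                  have hcast : ((A.filter (G.Adj y)).card : ℝ) = (r : ℝ) := by rw [hrdef]
                  rw [hcast]
                  rcases Nat.eq_zero_or_pos r with hr0 | hr1
                  · rw [hr0]
                    have := fwt_le_one G y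
                    norm_num
                    linarith
                  · have hr1' : (1:ℝ) ≤ (r:ℝ) := by exact_mod_cast hr1
                    have hψ23 : ψ ≤ 2/3 := by
                      rw [hψdef]
                      rw [div_le_div_iff₀ hrpos (by norm_num)]
                      linarith
                    linarith
                · rw [hq'val y (hneu₁ y hy'), hb'val y (hneu₁ y hy')]
                  calc q y * ((A'.filter (G.Adj y)).card : ℝ)
                      ≤ q y * ((A.filter (G.Adj y)).card : ℝ) :=
                        mul_le_mul_of_nonneg_left (hfmono y) (hq₁ y hy')
                    _ ≤ b y := hW4 y hy')
              (fun y hy => by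
                rw [hq'val y (hneu₂ y hy), hb'val y (hneu₂ y hy)]
                calc q y * ((A'.filter (G.Adj y)).card : ℝ)
                    ≤ q y * ((A.filter (G.Adj y)).card : ℝ) :=
                      mul_le_mul_of_nonneg_left (hfmono y) (hq₂ y hy)
                  _ ≤ b y := hW5 y hy)
          have hus' : u ∉ s' := fun h => huA' (hsub h)
          refine ⟨insert u s', Finset.insert_subset hu (hsub.trans hAsub), ?_, ?_, ?_, ?_⟩
          · intro v hv
            rcases Finset.mem_insert.mp hv with rfl | hv'
            · have hsubset : (insert v s' ∪ S₁).filter (G.Adj v) ⊆ s'.filter (G.Adj v) := by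
                intro w hw
                obtain ⟨hwmem, hwadj⟩ := Finset.mem_filter.mp hw
                refine Finset.mem_filter.mpr ⟨?_, hwadj⟩
                rcases Finset.mem_union.mp hwmem with hw1 | hw2
                · rcases Finset.mem_insert.mp hw1 with rfl | hw1'
                  · exact absurd hwadj (G.irrefl)
                  · exact hw1'
                · exact absurd hwadj (hnoS₁ w hw2)
              calc ((insert v s' ∪ S₁).filter (G.Adj v)).card
                  ≤ (s'.filter (G.Adj v)).card := Finset.card_le_card hsubset
                _ ≤ 1 := hC3 v (Finset.mem_insert_self _ _)
            · have hset : insert u s' ∪ S₁ = s' ∪ insert u S₁ := by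
                rw [Finset.insert_union, Finset.union_insert]
              rw [hset]
              exact hC1 v hv'
          · intro v hv y hy
            rcases Finset.mem_insert.mp hv with rfl | hv'
            · exact hT₂ y hy
            · exact hC2 v hv' y hy
          · intro y hy
            have hnadj : ¬ G.Adj y u := fun h => hnoS₁ y hy h.symm
            rw [Finset.filter_insert, if_neg hnadj]
            exact hC3 y (Finset.mem_insert_of_mem hy)
          · have hS₁sum : ∑ y ∈ insert u S₁, b' y = (1 - fwt G u) + ∑ y ∈ S₁, b y := by
              rw [Finset.sum_insert huS₁, hb'u]
              congr 1
              exact Finset.sum_congr rfl (fun y hy => hb'val y (hneu₁ y hy))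
            have hS₂sum : ∑ y ∈ S₂, b' y = ∑ y ∈ S₂, b y :=
              Finset.sum_congr rfl (fun y hy => hb'val y (hneu₂ y hy))
            rw [hS₁sum, hS₂sum] at hsum
            rw [hsplit, Finset.card_insert_of_notMem hus']
            push_cast
            linarith

end DissocProof

theorem stmt_14 {V : Type*} [Fintype V] [DecidableEq V] (G : SimpleGraph V)
    [DecidableRel G.Adj] :
    ∃ s : Finset V, (∀ v ∈ s, (s.filter (G.Adj v)).card ≤ 1) ∧
      (∑ v : V, min 1 ((1 : ℝ) / (zeta G v + 1/2))) ≤ s.card := by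
  obtain ⟨s, _, hC1, _, _, hsum⟩ :=
    dissoc_main G (Fintype.card V) Finset.univ ∅ ∅ (fun _ => 0) (fun _ => 0)
      (by simp) (by simp) (by simp) (by simp) (by simp) (by simp)
      (by simp) (by simp) (by simp) (by simp) (by simp)
  refine ⟨s, ?_, ?_⟩
  · intro v hv
    have h := hC1 v hv
    simpa using h
  · have h : (∑ v : V, min 1 ((1 : ℝ) / (zeta G v + 1/2))) = ∑ v ∈ Finset.univ, fwt G v := by
      rfl
    rw [h]
    simpa using hsum
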